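/- arXiv:1112.1838 — 5 statements merged into one kernel-verified Lean document; each statement's English description precedes it below -/
import Mathlib

section
/- Let φ : ℝ → M_n(ℝ) be an admissible kernel and suppose K = ∫_ℝ φ_t dt has spectral radius strictly smaller than 1. Then the series Ψ = ∑_{k=1}^∞ φ^{⋆k} converges entrywise in L¹(ℝ) (and almost everywhere, by monotone convergence of the nonnegative partial sums); the limit Ψ is entrywise nonnegative, causal, entrywise integrable, and satisfies ∫_ℝ Ψ_t dt = K (I − K)^{-1}. -/
open MeasureTheory Filter
open scoped ENNReal

/-- Convolution of matrix-valued functions: `(A ⋆ B)_t = ∫ A_s B_{t-s} ds`, computed entrywise. -/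
noncomputable def mconv {d : ℕ} (A B : ℝ → Matrix (Fin d) (Fin d) ℝ) :
    ℝ → Matrix (Fin d) (Fin d) ℝ :=
  fun t => Matrix.of fun i j => ∫ s : ℝ, ∑ k, A s i k * B (t - s) k j

/-- `convPow φ k` is the `(k+1)`-fold convolution power `φ^{⋆(k+1)}`
(so `convPow φ 0 = φ^{⋆1} = φ`); as `k` ranges over `ℕ` this covers all `φ^{⋆k}`, `k ≥ 1`. -/
noncomputable def convPow {d : ℕ} (φ : ℝ → Matrix (Fin d) (Fin d) ℝ) :
    ℕ → ℝ → Matrix (Fin d) (Fin d) ℝ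
  | 0 => φ
  | k + 1 => mconv φ (convPow φ k)

open scoped NNReal Topology Convolution

/-- The dot product as a continuous bilinear map on `Fin d → ℝ`. -/
noncomputable def dotCLM (d : ℕ) : (Fin d → ℝ) →L[ℝ] (Fin d → ℝ) →L[ℝ] ℝ :=
  LinearMap.toContinuousLinearMap
  { toFun := fun x => LinearMap.toContinuousLinearMap
      { toFun := fun y => ∑ k, x k * y k
        map_add' := fun y z => by simp [mul_add, Finset.sum_add_distrib]
        map_smul' := fun c y => by simp [Finset.mul_sum, mul_left_comm] }
    map_add' := fun x x' => by
      ext y; simp [add_mul, Finset.sum_add_distrib]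
    map_smul' := fun c x => by
      ext y; simp [Finset.mul_sum, mul_assoc] }

@[simp] lemma dotCLM_apply {d : ℕ} (x y : Fin d → ℝ) : dotCLM d x y = ∑ k, x k * y k := by
  simp [dotCLM]

section cx
variable {d : ℕ}
attribute [local instance] Matrix.linftyOpNormedRing Matrix.linftyOpNormedAlgebra

lemma entry_norm_le (M : Matrix (Fin d) (Fin d) ℂ) (i j : Fin d) : ‖M i j‖ ≤ ‖M‖ := by
  have h : ‖M i j‖₊ ≤ ‖M‖₊ := by
    rw [Matrix.linfty_opNNNorm_def]
    calc ‖M i j‖₊ ≤ ∑ j' : Fin d, ‖M i j'‖₊ :=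
          Finset.single_le_sum (f := fun j' => ‖M i j'‖₊) (fun _ _ => by positivity)
            (Finset.mem_univ j)
      _ ≤ _ := Finset.le_sup (f := fun i' => ∑ j' : Fin d, ‖M i' j'‖₊) (Finset.mem_univ i)
  exact h

lemma geom_summable (K : Matrix (Fin d) (Fin d) ℝ)
    (hρ : spectralRadius ℂ (K.map Complex.ofReal) < 1) :
    ∃ u : ℕ → ℝ, Summable u ∧ ∀ (n : ℕ) (i j : Fin d), |(K ^ n) i j| ≤ u n := by
  set A : Matrix (Fin d) (Fin d) ℂ := K.map Complex.ofReal with hA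
  have hmap : ∀ n : ℕ, (K ^ n).map Complex.ofReal = A ^ n := by
    intro n
    have h := map_pow (Complex.ofRealHom.mapMatrix (m := Fin d)) K n
    simp only [RingHom.mapMatrix_apply] at h
    convert h using 2
    all_goals rfl
  obtain ⟨r, hr1, hr2⟩ := exists_between hρ
  have hrtop : r ≠ ⊤ := (hr2.trans_le le_top).ne
  set r' : ℝ≥0 := r.toNNReal with hr'
  have hrr' : (r' : ℝ≥0∞) = r := ENNReal.coe_toNNReal hrtop
  have hr'1 : (r' : ℝ) < 1 := by
    have := hr2
    rw [← hrr'] at this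
    exact_mod_cast this
  have hgel := spectrum.pow_nnnorm_pow_one_div_tendsto_nhds_spectralRadius A
  have hev : ∀ᶠ n : ℕ in atTop, (‖A ^ n‖₊ : ℝ≥0∞) ^ (1 / (n : ℝ)) < r :=
    hgel.eventually_lt_const hr1
  have hev2 : ∀ᶠ n : ℕ in atTop, ‖A ^ n‖ ≤ (r' : ℝ) ^ n := by
    filter_upwards [hev, eventually_ge_atTop 1] with n hn hn1
    have hne : (n : ℝ) ≠ 0 := by positivity
    have h1 : ((‖A ^ n‖₊ : ℝ≥0∞) ^ (1 / (n : ℝ))) ^ (n : ℝ) ≤ r ^ (n : ℝ) :=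
      ENNReal.rpow_le_rpow hn.le (by positivity)
    rw [← ENNReal.rpow_mul, one_div, inv_mul_cancel₀ hne, ENNReal.rpow_one,
      ENNReal.rpow_natCast, ← hrr', ← ENNReal.coe_pow, ENNReal.coe_le_coe] at h1
    calc ‖A ^ n‖ = ((‖A ^ n‖₊ : ℝ≥0) : ℝ) := rfl
      _ ≤ ((r' ^ n : ℝ≥0) : ℝ) := by exact_mod_cast h1
      _ = (r' : ℝ) ^ n := by push_cast; ring
  refine ⟨fun n => ‖A ^ n‖, ?_, ?_⟩
  · apply Summable.of_norm_bounded_eventually (g := fun n => (r' : ℝ) ^ n)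
      (summable_geometric_of_lt_one r'.coe_nonneg hr'1)
    rw [Nat.cofinite_eq_atTop]
    filter_upwards [hev2] with n hn
    rwa [Real.norm_eq_abs, abs_of_nonneg (norm_nonneg _)]
  · intro n i j
    have h : (A ^ n) i j = ((K ^ n) i j : ℂ) := by rw [← hmap n]; rfl
    calc |(K ^ n) i j| = ‖(A ^ n) i j‖ := by rw [h, Complex.norm_real, Real.norm_eq_abs]
      _ ≤ ‖A ^ n‖ := entry_norm_le _ _ _

end cx

section geo
variable {d : ℕ}

lemma matrix_geom (K : Matrix (Fin d) (Fin d) ℝ)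
    (hsum : ∀ i j, Summable fun n : ℕ => (K ^ n) i j) :
    ∃ S : Matrix (Fin d) (Fin d) ℝ,
      HasSum (fun n : ℕ => K ^ (n + 1)) S ∧ K * (1 - K)⁻¹ = S := by
  set T : Matrix (Fin d) (Fin d) ℝ := Matrix.of fun i j => ∑' n : ℕ, (K ^ n) i j with hTdef
  have hT : HasSum (fun n : ℕ => K ^ n) T :=
    Pi.hasSum.2 fun i => Pi.hasSum.2 fun j => (hsum i j).hasSum
  have htop : Tendsto (fun n : ℕ => K ^ n) atTop (𝓝 0) := hT.summable.tendsto_atTop_zero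
  have hps : Tendsto (fun N : ℕ => ∑ n ∈ Finset.range N, K ^ n) atTop (𝓝 T) :=
    hT.tendsto_sum_nat
  have hunit : (1 - K) * T = 1 := by
    have h1 : Tendsto (fun N : ℕ => (1 - K) * ∑ n ∈ Finset.range N, K ^ n) atTop
        (𝓝 ((1 - K) * T)) := hps.const_mul _
    have h2 : (fun N : ℕ => (1 - K) * ∑ n ∈ Finset.range N, K ^ n)
        = fun N : ℕ => 1 - K ^ N := by
      funext N; exact mul_neg_geom_sum K N
    rw [h2] at h1
    have h3 : Tendsto (fun N : ℕ => 1 - K ^ N) atTop (𝓝 (1 - 0)) :=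
      tendsto_const_nhds.sub htop
    rw [sub_zero] at h3
    exact tendsto_nhds_unique h1 h3
  have hinv : (1 - K)⁻¹ = T := Matrix.inv_eq_right_inv hunit
  have hshift : HasSum (fun n : ℕ => K ^ (n + 1)) (T - 1) := by
    rw [hasSum_nat_add_iff 1]
    simpa using hT
  refine ⟨T - 1, hshift, ?_⟩
  have hKT : HasSum (fun n : ℕ => K ^ (n + 1)) (K * T) := by
    have := hT.mul_left K
    simpa [← pow_succ'] using this
  rw [hinv]
  exact hKT.unique hshift
end geo

section induct
variable {d : ℕ}

lemma aesm_pi {d : ℕ} {F : ℝ → Fin d → ℝ}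
    (h : ∀ k, AEMeasurable (fun t => F t k) volume) : AEStronglyMeasurable F volume := by
  refine ⟨fun t k => (h k).mk _ t,
    (measurable_pi_lambda _ fun k => (h k).measurable_mk).stronglyMeasurable, ?_⟩
  have hae : ∀ᵐ t ∂(volume : Measure ℝ), ∀ k, F t k = (h k).mk _ t :=
    ae_all_iff.2 fun k => (h k).ae_eq_mk
  filter_upwards [hae] with t ht
  funext k
  exact ht k

lemma convPow_facts (φ : ℝ → Matrix (Fin d) (Fin d) ℝ)
    (hmeas : ∀ i j, Measurable fun t => φ t i j)
    (hpos : ∀ t i j, 0 ≤ φ t i j)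
    (hint : ∀ i j, Integrable fun t => φ t i j)
    (hcausal : ∀ t < (0 : ℝ), φ t = 0)
    (K : Matrix (Fin d) (Fin d) ℝ)
    (hK : K = Matrix.of fun i j => ∫ t : ℝ, φ t i j) : ∀ n : ℕ,
    (∀ t i j, 0 ≤ convPow φ n t i j) ∧
    (∀ t < (0 : ℝ), convPow φ n t = 0) ∧
    (∀ i j, Integrable fun t => convPow φ n t i j) ∧
    (∀ i j, (∫ t : ℝ, convPow φ n t i j) = (K ^ (n + 1)) i j) := by
  intro n
  induction n with
  | zero =>
    refine ⟨hpos, hcausal, hint, fun i j => ?_⟩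
    rw [pow_one, hK]; rfl
  | succ n ih =>
    obtain ⟨gpos, gcaus, gint, gigl⟩ := ih
    set g := convPow φ n with hg
    have hconv : ∀ i j : Fin d,
        (fun t => convPow φ (n + 1) t i j)
          = ((fun t k => φ t i k) ⋆[dotCLM d, volume] (fun t k => g t k j)) := by
      intro i j
      funext t
      show (mconv φ g t) i j = _
      rw [convolution_def]
      simp only [mconv, Matrix.of_apply, dotCLM_apply]
    have hFint : ∀ i : Fin d, Integrable (fun t (k : Fin d) => φ t i k) volume := by
      intro i
      refine ⟨?_, ?_⟩
      · exact (measurable_pi_lambda _ fun k => hmeas i k).aestronglyMeasurable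
      · apply HasFiniteIntegral.mono' (g := fun t => ∑ k, |φ t i k|)
          (integrable_finset_sum _ fun k _ => (hint i k).abs).2
        filter_upwards with t
        rw [pi_norm_le_iff_of_nonneg (Finset.sum_nonneg fun k _ => abs_nonneg _)]
        intro k
        exact Finset.single_le_sum (f := fun k' => |φ t i k'|) (fun _ _ => abs_nonneg _)
          (Finset.mem_univ k)
    have hGint : ∀ j : Fin d, Integrable (fun t (k : Fin d) => g t k j) volume := by
      intro j
      refine ⟨?_, ?_⟩
      · exact aesm_pi fun k => (gint k j).aestronglyMeasurable.aemeasurable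
      · apply HasFiniteIntegral.mono' (g := fun t => ∑ k, |g t k j|)
          (integrable_finset_sum _ fun k _ => (gint k j).abs).2
        filter_upwards with t
        rw [pi_norm_le_iff_of_nonneg (Finset.sum_nonneg fun k _ => abs_nonneg _)]
        intro k
        exact Finset.single_le_sum (f := fun k' => |g t k' j|) (fun _ _ => abs_nonneg _)
          (Finset.mem_univ k)
    refine ⟨?_, ?_, ?_, ?_⟩
    · intro t i j
      exact integral_nonneg fun s =>
        Finset.sum_nonneg fun k _ => mul_nonneg (hpos s i k) (gpos (t - s) k j)
    · intro t ht
      show mconv φ g t = 0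
      ext i j
      have hzero : (fun s => ∑ k, φ s i k * g (t - s) k j) = fun _ => (0 : ℝ) := by
        funext s
        rcases lt_or_ge s 0 with hs | hs
        · simp [hcausal s hs]
        · have : t - s < 0 := by linarith
          simp [gcaus _ this]
      show (∫ s : ℝ, ∑ k, φ s i k * g (t - s) k j) = 0
      rw [hzero, integral_zero]
    · intro i j
      rw [hconv i j]
      exact (hFint i).integrable_convolution (dotCLM d) (hGint j)
    · intro i j
      rw [hconv i j, integral_convolution, dotCLM_apply]
      · have hF : ∀ k, (∫ t, (fun k' => φ t i k') : Fin d → ℝ) k = ∫ t, φ t i k := by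
          intro k
          have := (ContinuousLinearMap.proj (R := ℝ) (φ := fun _ : Fin d => ℝ) k
            ).integral_comp_comm (hFint i)
          simpa using this.symm
        have hG : ∀ k, (∫ t, (fun k' => g t k' j) : Fin d → ℝ) k = ∫ t, g t k j := by
          intro k
          have := (ContinuousLinearMap.proj (R := ℝ) (φ := fun _ : Fin d => ℝ) k
            ).integral_comp_comm (hGint j)
          simpa using this.symm
        have hKmul : (K ^ (n + 1 + 1)) i j = ∑ k, K i k * (K ^ (n + 1)) k j := by
          rw [pow_succ']
          exact Matrix.mul_apply
        rw [hKmul]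
        refine Finset.sum_congr rfl fun k _ => ?_
        rw [hF k, hG k, gigl k j, hK]
        rfl
      · exact hFint i
      · exact hGint j
end induct

/-- For an admissible kernel `φ` with `K = ∫ φ` of spectral radius `< 1`, the
series `Ψ = ∑_{k ≥ 1} φ^{⋆k}` converges entrywise in `L¹` and almost everywhere; `Ψ` is entrywise
nonnegative, causal, entrywise integrable, and `∫ Ψ = K (I - K)⁻¹`. -/
theorem stmt_5 {d : ℕ} (φ : ℝ → Matrix (Fin d) (Fin d) ℝ)
    (hmeas : ∀ i j, Measurable fun t => φ t i j)
    (hpos : ∀ t i j, 0 ≤ φ t i j)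
    (hint : ∀ i j, Integrable fun t => φ t i j)
    (hcausal : ∀ t < (0 : ℝ), φ t = 0)
    (K : Matrix (Fin d) (Fin d) ℝ)
    (hK : K = Matrix.of fun i j => ∫ t : ℝ, φ t i j)
    (hρ : spectralRadius ℂ (K.map Complex.ofReal) < 1) :
    ∃ Ψ : ℝ → Matrix (Fin d) (Fin d) ℝ,
      (∀ t i j, 0 ≤ Ψ t i j) ∧
      (∀ t < (0 : ℝ), Ψ t = 0) ∧
      (∀ i j, Integrable fun t => Ψ t i j) ∧
      (∀ᵐ t : ℝ, ∀ i j, HasSum (fun k : ℕ => convPow φ k t i j) (Ψ t i j)) ∧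
      (∀ i j, Tendsto
        (fun N : ℕ => ∫ t : ℝ, |(∑ k ∈ Finset.range N, convPow φ k t i j) - Ψ t i j|)
        atTop (nhds 0)) ∧
      (Matrix.of fun i j => ∫ t : ℝ, Ψ t i j) = K * (1 - K)⁻¹ := by
  classical
  -- entries of powers of `K` are nonnegative
  have hK0 : ∀ i j, 0 ≤ K i j := by
    intro i j; rw [hK]; exact integral_nonneg fun t => hpos t i j
  have hKnn : ∀ (n : ℕ) (i j : Fin d), 0 ≤ (K ^ n) i j := by
    intro n
    induction n with
    | zero =>
      intro i j
      by_cases h : i = j <;> simp [pow_zero, Matrix.one_apply, h]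
    | succ n ih =>
      intro i j
      rw [pow_succ, Matrix.mul_apply]
      exact Finset.sum_nonneg fun k _ => mul_nonneg (ih i k) (hK0 k j)
  obtain ⟨u, hu, hub⟩ := geom_summable K hρ
  have hsum : ∀ i j, Summable fun n : ℕ => (K ^ n) i j := fun i j =>
    Summable.of_norm_bounded (g := u) hu fun n => by
      simpa [Real.norm_eq_abs] using hub n i j
  obtain ⟨S, hS, hKS⟩ := matrix_geom K hsum
  have hSij : ∀ i j, HasSum (fun n : ℕ => (K ^ (n + 1)) i j) (S i j) := fun i j =>
    Pi.hasSum.1 (Pi.hasSum.1 hS i) j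
  have facts := convPow_facts φ hmeas hpos hint hcausal K hK
  have gpos : ∀ n t i j, 0 ≤ convPow φ n t i j := fun n => (facts n).1
  have gcaus : ∀ n, ∀ t < (0 : ℝ), convPow φ n t = 0 := fun n => (facts n).2.1
  have gint : ∀ n i j, Integrable fun t => convPow φ n t i j := fun n => (facts n).2.2.1
  have gigl : ∀ n i j, (∫ t : ℝ, convPow φ n t i j) = (K ^ (n + 1)) i j :=
    fun n => (facts n).2.2.2
  -- ENNReal-valued sum of the series
  set G : Fin d → Fin d → ℝ → ℝ≥0∞ :=
    fun i j t => ∑' n : ℕ, ENNReal.ofReal (convPow φ n t i j) with hGdef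
  have hGaem : ∀ i j, AEMeasurable (G i j) volume := fun i j =>
    AEMeasurable.ennreal_tsum fun n =>
      ENNReal.measurable_ofReal.comp_aemeasurable
        (gint n i j).aestronglyMeasurable.aemeasurable
  have hlofReal : ∀ (n : ℕ) (i j : Fin d),
      (∫⁻ t, ENNReal.ofReal (convPow φ n t i j)) = ENNReal.ofReal ((K ^ (n + 1)) i j) := by
    intro n i j
    rw [← MeasureTheory.ofReal_integral_eq_lintegral_ofReal (gint n i j)
      (Eventually.of_forall fun t => gpos n t i j), gigl n i j]
  have hlin : ∀ i j, (∫⁻ t, G i j t) = ENNReal.ofReal (S i j) := by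
    intro i j
    have haem : ∀ n : ℕ, AEMeasurable (fun t => ENNReal.ofReal (convPow φ n t i j)) volume :=
      fun n => ENNReal.measurable_ofReal.comp_aemeasurable
        (gint n i j).aestronglyMeasurable.aemeasurable
    show (∫⁻ t, ∑' n : ℕ, ENNReal.ofReal (convPow φ n t i j)) = ENNReal.ofReal (S i j)
    rw [lintegral_tsum haem]
    simp_rw [hlofReal]
    rw [← ENNReal.ofReal_tsum_of_nonneg (fun n => hKnn (n + 1) i j) (hSij i j).summable,
      (hSij i j).tsum_eq]
  have hfin : ∀ i j, ∀ᵐ t : ℝ, G i j t ≠ ⊤ := by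
    intro i j
    have h := ae_lt_top' (hGaem i j) (by rw [hlin i j]; exact ENNReal.ofReal_ne_top)
    filter_upwards [h] with t ht
    exact ht.ne
  have hsummable : ∀ i j, ∀ᵐ t : ℝ, Summable fun n : ℕ => convPow φ n t i j := by
    intro i j
    filter_upwards [hfin i j] with t ht
    have h := ENNReal.summable_toReal ht
    refine h.congr fun n => ?_
    exact ENNReal.toReal_ofReal (gpos n t i j)
  -- pointwise identity for the real tsum
  have hpt : ∀ t i j, (∑' n : ℕ, convPow φ n t i j) = (G i j t).toReal := by
    intro t i j
    rw [hGdef, ENNReal.tsum_toReal_eq fun n => ENNReal.ofReal_ne_top]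
    exact tsum_congr fun n => (ENNReal.toReal_ofReal (gpos n t i j)).symm
  -- Integrability of the candidate Ψ, entrywise
  have hΨint : ∀ i j, Integrable (fun t => ∑' n : ℕ, convPow φ n t i j) volume := by
    intro i j
    have heq : (fun t => ∑' n : ℕ, convPow φ n t i j) = fun t => (G i j t).toReal :=
      funext fun t => hpt t i j
    rw [heq]
    refine ⟨(ENNReal.measurable_toReal.comp_aemeasurable (hGaem i j)).aestronglyMeasurable, ?_⟩
    rw [hasFiniteIntegral_iff_ofReal (Eventually.of_forall fun t => ENNReal.toReal_nonneg)]
    calc (∫⁻ t, ENNReal.ofReal (G i j t).toReal)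
        ≤ ∫⁻ t, G i j t := lintegral_mono fun t => ENNReal.ofReal_toReal_le
      _ < ⊤ := by rw [hlin i j]; exact ENNReal.ofReal_lt_top
  -- value of the integral of Ψ, entrywise
  have hΨval : ∀ i j, (∫ t : ℝ, ∑' n : ℕ, convPow φ n t i j) = S i j := by
    intro i j
    rw [integral_tsum (fun n => (gint n i j).aestronglyMeasurable) ?_]
    · simp_rw [gigl]
      exact (hSij i j).tsum_eq
    · have h : ∀ n : ℕ, (∫⁻ t, ‖convPow φ n t i j‖ₑ)
          = ENNReal.ofReal ((K ^ (n + 1)) i j) := by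
        intro n
        rw [← hlofReal n i j]
        exact lintegral_congr fun t => Real.enorm_eq_ofReal (gpos n t i j)
      simp_rw [h]
      rw [← ENNReal.ofReal_tsum_of_nonneg (fun n => hKnn (n + 1) i j) (hSij i j).summable]
      exact ENNReal.ofReal_ne_top
  refine ⟨fun t => Matrix.of fun i j => ∑' n : ℕ, convPow φ n t i j,
    ?_, ?_, ?_, ?_, ?_, ?_⟩
  · intro t i j
    exact tsum_nonneg fun n => gpos n t i j
  · intro t ht
    ext i j
    show (∑' n : ℕ, convPow φ n t i j) = 0
    have h : ∀ n : ℕ, convPow φ n t i j = 0 := by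
      intro n; rw [gcaus n t ht]; rfl
    simp [h]
  · exact hΨint
  · have h := ae_all_iff.2 fun i => ae_all_iff.2 fun j => hsummable i j
    filter_upwards [h] with t ht i j
    exact (ht i j).hasSum
  · intro i j
    have key : ∀ N : ℕ,
        (∫ t : ℝ, |(∑ k ∈ Finset.range N, convPow φ k t i j)
            - (∑' n : ℕ, convPow φ n t i j)|)
          = S i j - ∑ k ∈ Finset.range N, (K ^ (k + 1)) i j := by
      intro N
      have h1 : (fun t => |(∑ k ∈ Finset.range N, convPow φ k t i j)
            - (∑' n : ℕ, convPow φ n t i j)|)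
          =ᵐ[volume] fun t => (∑' n : ℕ, convPow φ n t i j)
            - ∑ k ∈ Finset.range N, convPow φ k t i j := by
        filter_upwards [hsummable i j] with t ht
        have hle : (∑ k ∈ Finset.range N, convPow φ k t i j)
            ≤ ∑' n : ℕ, convPow φ n t i j :=
          Summable.sum_le_tsum _ (fun k _ => gpos k t i j) ht
        rw [abs_sub_comm, abs_of_nonneg (sub_nonneg.2 hle)]
      rw [integral_congr_ae h1,
        integral_sub (hΨint i j) (integrable_finset_sum _ fun k _ => gint k i j),
        integral_finset_sum _ fun k _ => gint k i j, hΨval i j]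
      congr 1
      exact Finset.sum_congr rfl fun k _ => gigl k i j
    have htend : Tendsto
        (fun N : ℕ => S i j - ∑ k ∈ Finset.range N, (K ^ (k + 1)) i j) atTop (𝓝 0) := by
      have h := (hSij i j).tendsto_sum_nat.const_sub (S i j)
      rwa [sub_self] at h
    refine htend.congr fun N => ?_
    exact (key N).symm
  · rw [hKS]
    ext i j
    exact hΨval i j
end

section
/- Let φ : ℝ → M_n(ℝ) be an admissible kernel such that φ̂₀ = ∫_ℝ φ_t dt has spectral radius strictly smaller than 1. Then for every complex number z with Re z ≥ 0, the matrix I − φ̂_z is invertible; equivalently, 1 is not an eigenvalue of φ̂_z for any z in the closed right half-plane. -/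
open MeasureTheory
open scoped ENNReal

attribute [local instance] Matrix.linftyOpNormedRing Matrix.linftyOpNormedAlgebra

/-- Entrywise domination of powers: if each entry of `B` is dominated in norm by the
corresponding entry of `A`, then the same holds for all powers. -/
lemma stmt8_pow_entry_bound {d : ℕ} (A : Matrix (Fin d) (Fin d) ℝ)
    (B : Matrix (Fin d) (Fin d) ℂ) (h : ∀ i j, ‖B i j‖ ≤ A i j) :
    ∀ k (i j : Fin d), ‖(B ^ k) i j‖ ≤ (A ^ k) i j := by
  intro k
  induction k with
  | zero =>
    intro i j
    by_cases hij : i = j <;> simp [pow_zero, Matrix.one_apply, hij]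
  | succ k ih =>
    intro i j
    rw [pow_succ, pow_succ, Matrix.mul_apply, Matrix.mul_apply]
    calc ‖∑ l, (B ^ k) i l * B l j‖ ≤ ∑ l, ‖(B ^ k) i l * B l j‖ := norm_sum_le _ _
    _ ≤ ∑ l, (A ^ k) i l * A l j := by
        refine Finset.sum_le_sum fun l _ => ?_
        rw [norm_mul]
        exact mul_le_mul (ih i l) (h l j) (norm_nonneg _) ((norm_nonneg _).trans (ih i l))

/-- If each entry of the complex matrix `B` is dominated in norm by the corresponding entry
of the real matrix `A`, then the spectral radius of `B` is at most that of `A` (as a complex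
matrix). -/
lemma stmt8_spectralRadius_le {d : ℕ} (A : Matrix (Fin d) (Fin d) ℝ)
    (B : Matrix (Fin d) (Fin d) ℂ) (h : ∀ i j, ‖B i j‖ ≤ A i j) :
    spectralRadius ℂ B ≤ spectralRadius ℂ (A.map Complex.ofReal) := by
  haveI : CompleteSpace (Matrix (Fin d) (Fin d) ℂ) := FiniteDimensional.complete ℂ _
  have hmap : ∀ k : ℕ, (A.map Complex.ofReal) ^ k = (A ^ k).map Complex.ofReal := by
    intro k
    have := map_pow (Complex.ofRealHom.mapMatrix : Matrix (Fin d) (Fin d) ℝ →+* Matrix (Fin d) (Fin d) ℂ) A k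
    exact (by simpa [RingHom.mapMatrix_apply] using this.symm :
      A.map ⇑Complex.ofRealHom ^ k = (A ^ k).map ⇑Complex.ofRealHom)
  have hnorm : ∀ k : ℕ, ‖B ^ k‖₊ ≤ ‖(A.map Complex.ofReal) ^ k‖₊ := by
    intro k
    rw [hmap, Matrix.linfty_opNNNorm_def, Matrix.linfty_opNNNorm_def]
    refine Finset.sup_mono_fun fun i _ => Finset.sum_le_sum fun j _ => ?_
    rw [← NNReal.coe_le_coe]
    simp only [coe_nnnorm, Matrix.map_apply, Complex.norm_real]
    exact (stmt8_pow_entry_bound A B h k i j).trans (le_abs_self _)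
  refine le_of_tendsto_of_tendsto'
    (spectrum.pow_nnnorm_pow_one_div_tendsto_nhds_spectralRadius B)
    (spectrum.pow_nnnorm_pow_one_div_tendsto_nhds_spectralRadius (A.map Complex.ofReal))
    fun n => ?_
  exact ENNReal.rpow_le_rpow (by exact_mod_cast hnorm n) (by positivity)

/-- For an admissible kernel `φ` such that `φ̂₀ = ∫ φ` has spectral radius
strictly smaller than `1`, the matrix `I - φ̂_z` is invertible for every `z` with `Re z ≥ 0`;
equivalently, `1` is not an eigenvalue of `φ̂_z` for any `z` in the closed right half-plane. -/
theorem stmt_8 {d : ℕ} (φ : ℝ → Matrix (Fin d) (Fin d) ℝ)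
    (hmeas : ∀ i j, Measurable fun t => φ t i j)
    (hpos : ∀ t i j, 0 ≤ φ t i j)
    (hint : ∀ i j, Integrable fun t => φ t i j)
    (hcausal : ∀ t < (0 : ℝ), φ t = 0)
    (hρ : spectralRadius ℂ
      ((Matrix.of fun i j => ∫ t : ℝ, φ t i j).map Complex.ofReal) < 1) :
    ∀ z : ℂ, 0 ≤ z.re →
      IsUnit (1 - Matrix.of fun i j => ∫ t : ℝ, Complex.exp (-(z * t)) * ((φ t i j : ℝ) : ℂ)) ∧
      (1 : ℂ) ∉ spectrum ℂ
        (Matrix.of fun i j => ∫ t : ℝ, Complex.exp (-(z * t)) * ((φ t i j : ℝ) : ℂ)) := by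
  intro z hz
  set A : Matrix (Fin d) (Fin d) ℝ := Matrix.of fun i j => ∫ t : ℝ, φ t i j with hA
  set B : Matrix (Fin d) (Fin d) ℂ :=
    Matrix.of fun i j => ∫ t : ℝ, Complex.exp (-(z * t)) * ((φ t i j : ℝ) : ℂ) with hB
  -- entrywise bound
  have hAB : ∀ i j, ‖B i j‖ ≤ A i j := by
    intro i j
    have h1 : ‖∫ t : ℝ, Complex.exp (-(z * t)) * ((φ t i j : ℝ) : ℂ)‖ ≤
        ∫ t : ℝ, ‖Complex.exp (-(z * t)) * ((φ t i j : ℝ) : ℂ)‖ :=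
      norm_integral_le_integral_norm _
    refine h1.trans ?_
    refine integral_mono_of_nonneg (Filter.Eventually.of_forall fun t => norm_nonneg _)
      (hint i j) (Filter.Eventually.of_forall fun t => ?_)
    show ‖Complex.exp (-(z * t)) * ((φ t i j : ℝ) : ℂ)‖ ≤ φ t i j
    rcases lt_or_ge t 0 with ht | ht
    · simp [hcausal t ht]
    · rw [norm_mul, Complex.norm_real, Complex.norm_exp]
      have hre : (-(z * (t : ℂ))).re = -(z.re * t) := by
        simp [Complex.mul_re]
      rw [hre, Real.norm_eq_abs, abs_of_nonneg (hpos t i j)]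
      calc Real.exp (-(z.re * t)) * φ t i j ≤ 1 * φ t i j := by
            refine mul_le_mul_of_nonneg_right ?_ (hpos t i j)
            rw [Real.exp_le_one_iff]
            exact neg_nonpos.mpr (mul_nonneg hz ht)
      _ = φ t i j := one_mul _
  -- spectral radius bound
  have hρB : spectralRadius ℂ B < 1 := lt_of_le_of_lt (stmt8_spectralRadius_le A B hAB) hρ
  have hmem : (1 : ℂ) ∉ spectrum ℂ B := by
    intro hmem
    have h1 : (‖(1 : ℂ)‖₊ : ℝ≥0∞) ≤ spectralRadius ℂ B :=
      le_iSup₂ (f := fun k (_ : k ∈ spectrum ℂ B) => (‖k‖₊ : ℝ≥0∞)) (1 : ℂ) hmem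
    simp only [nnnorm_one, ENNReal.coe_one] at h1
    exact absurd (lt_of_le_of_lt h1 hρB) (lt_irrefl _)
  refine ⟨?_, hmem⟩
  have := spectrum.notMem_iff.mp hmem
  simpa using this
end

section
/- Let φ : ℝ → M_n(ℝ) be an admissible kernel with φ̂₀ = ∫_ℝ φ_t dt of spectral radius strictly smaller than 1, and let Ψ = ∑_{k=1}^∞ φ^{⋆k} (the entrywise L¹ sum of convolution powers). Then for every z ∈ ℂ with Re z ≥ 0, the Laplace transforms satisfy Ψ̂_z = φ̂_z (I − φ̂_z)^{-1} and I + Ψ̂_z = (I − φ̂_z)^{-1}. -/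
open MeasureTheory
open scoped ENNReal
open Convolution

def Ker {d : ℕ} (A : ℝ → Matrix (Fin d) (Fin d) ℝ) : Prop :=
  (∀ i j, Integrable fun t => A t i j) ∧
  (∀ i j, ∀ᵐ t : ℝ, t < 0 → A t i j = 0)


lemma mconv_key {d : ℕ} {A B : ℝ → Matrix (Fin d) (Fin d) ℝ}
    (hA : Ker A) (hB : Ker B) (i j : Fin d) :
    ∀ᵐ t : ℝ, (∀ k, ConvolutionExistsAt (fun s => A s i k) (fun u => B u k j) t
        (ContinuousLinearMap.mul ℝ ℝ) volume) ∧
      mconv A B t i j =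
        ∑ k, ((fun s => A s i k) ⋆[ContinuousLinearMap.mul ℝ ℝ] (fun u => B u k j)) t := by
  have hae : ∀ᵐ t : ℝ, ∀ k, ConvolutionExistsAt (fun s => A s i k) (fun u => B u k j) t
      (ContinuousLinearMap.mul ℝ ℝ) volume :=
    ae_all_iff.mpr fun k =>
      Integrable.ae_convolution_exists (L := ContinuousLinearMap.mul ℝ ℝ)
        (hA.1 i k) (hB.1 k j)
  filter_upwards [hae] with t ht
  refine ⟨ht, ?_⟩
  have hi : ∀ k : Fin d, Integrable fun s => A s i k * B (t - s) k j := by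
    intro k
    simpa [ConvolutionExistsAt, ContinuousLinearMap.mul_apply'] using ht k
  calc mconv A B t i j = ∑ k, ∫ s : ℝ, A s i k * B (t - s) k j :=
        integral_finset_sum _ (fun k _ => hi k)
    _ = _ := by
        refine Finset.sum_congr rfl fun k _ => ?_
        rw [convolution_def]
        simp [ContinuousLinearMap.mul_apply']

lemma ker_mconv {d : ℕ} {A B : ℝ → Matrix (Fin d) (Fin d) ℝ}
    (hA : Ker A) (hB : Ker B) : Ker (mconv A B) := by
  constructor
  · intro i j
    refine Integrable.congr
      (integrable_finset_sum (μ := volume) Finset.univ fun k _ =>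
        Integrable.integrable_convolution (L := ContinuousLinearMap.mul ℝ ℝ)
          (hA.1 i k) (hB.1 k j)) ?_
    filter_upwards [mconv_key hA hB i j] with t ht
    exact ht.2.symm
  · intro i j
    refine Filter.Eventually.of_forall fun t htneg => ?_
    have h0 : ∀ᵐ s : ℝ, ∑ k, A s i k * B (t - s) k j = 0 := by
      have hAae : ∀ᵐ s : ℝ, ∀ k : Fin d, s < 0 → A s i k = 0 :=
        ae_all_iff.mpr fun k => hA.2 i k
      have hBae : ∀ᵐ s : ℝ, ∀ k : Fin d, t - s < 0 → B (t - s) k j = 0 := by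
        refine ae_all_iff.mpr fun k => ?_
        exact (MeasureTheory.Measure.measurePreserving_sub_left volume t).quasiMeasurePreserving.tendsto_ae.eventually
          (hB.2 k j)
      filter_upwards [hAae, hBae] with s h1 h2
      refine Finset.sum_eq_zero fun k _ => ?_
      rcases lt_or_ge s 0 with hs | hs
      · rw [h1 k hs, zero_mul]
      · rw [h2 k (by linarith), mul_zero]
    simpa [mconv] using integral_eq_zero_of_ae h0

lemma mconv_nonneg {d : ℕ} {A B : ℝ → Matrix (Fin d) (Fin d) ℝ}
    (hA : ∀ t i j, 0 ≤ A t i j) (hB : ∀ t i j, 0 ≤ B t i j) :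
    ∀ t i j, 0 ≤ mconv A B t i j := by
  intro t i j
  exact integral_nonneg fun s =>
    Finset.sum_nonneg fun k _ => mul_nonneg (hA s i k) (hB (t - s) k j)


lemma exp_norm_le {z : ℂ} (hz : 0 ≤ z.re) {t : ℝ} (ht : 0 ≤ t) :
    ‖Complex.exp (-(z * t))‖ ≤ 1 := by
  rw [Complex.norm_exp, Real.exp_le_one_iff]
  simp only [Complex.neg_re, Complex.mul_re, Complex.ofReal_re, Complex.ofReal_im, mul_zero,
    sub_zero, neg_nonpos]
  exact mul_nonneg hz ht

lemma lap_integrand {d : ℕ} {z : ℂ} (hz : 0 ≤ z.re) {A : ℝ → Matrix (Fin d) (Fin d) ℝ}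
    (hA : Ker A) (i j : Fin d) :
    Integrable fun t : ℝ => Complex.exp (-(z * t)) * ((A t i j : ℝ) : ℂ) := by
  refine Integrable.mono' (hA.1 i j).norm ?_ ?_
  · exact ((Complex.continuous_exp.comp
      ((continuous_const.mul Complex.continuous_ofReal).neg)).aestronglyMeasurable).mul
      (Complex.continuous_ofReal.comp_aestronglyMeasurable (hA.1 i j).aestronglyMeasurable)
  · filter_upwards [hA.2 i j] with t ht
    rcases le_or_gt 0 t with h0 | h0
    · rw [norm_mul, Complex.norm_real]
      exact mul_le_of_le_one_left (norm_nonneg _) (exp_norm_le hz h0)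
    · rw [ht h0]
      simp

noncomputable def lap {d : ℕ} (z : ℂ) (A : ℝ → Matrix (Fin d) (Fin d) ℝ) :
    Matrix (Fin d) (Fin d) ℂ :=
  Matrix.of fun i j => ∫ t : ℝ, Complex.exp (-(z * t)) * ((A t i j : ℝ) : ℂ)

lemma lap_mconv {d : ℕ} {z : ℂ} (hz : 0 ≤ z.re) {A B : ℝ → Matrix (Fin d) (Fin d) ℝ}
    (hA : Ker A) (hB : Ker B) :
    lap z (mconv A B) = lap z A * lap z B := by
  ext i j
  rw [Matrix.mul_apply]
  have hfa : ∀ k, Integrable fun s : ℝ => Complex.exp (-(z * s)) * ((A s i k : ℝ) : ℂ) :=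
    fun k => lap_integrand hz hA i k
  have hfb : ∀ k, Integrable fun u : ℝ => Complex.exp (-(z * u)) * ((B u k j : ℝ) : ℂ) :=
    fun k => lap_integrand hz hB k j
  have hEmul : ∀ t s : ℝ, Complex.exp (-(z * s)) * Complex.exp (-(z * (t - s : ℝ))) =
      Complex.exp (-(z * t)) := by
    intro t s
    rw [← Complex.exp_add]
    congr 1
    push_cast
    ring
  calc (lap z (mconv A B)) i j
      = ∫ t : ℝ, ∑ k, ((fun s : ℝ => Complex.exp (-(z * s)) * ((A s i k : ℝ) : ℂ))
          ⋆[ContinuousLinearMap.mul ℂ ℂ]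
          (fun u : ℝ => Complex.exp (-(z * u)) * ((B u k j : ℝ) : ℂ))) t := by
        refine integral_congr_ae ?_
        filter_upwards [mconv_key hA hB i j] with t ⟨h1, h2⟩
        rw [show (mconv A B t i j : ℂ) = ((∑ k, ((fun s => A s i k)
            ⋆[ContinuousLinearMap.mul ℝ ℝ] (fun u => B u k j)) t : ℝ) : ℂ) by rw [h2],
          Complex.ofReal_sum, Finset.mul_sum]
        refine Finset.sum_congr rfl fun k _ => ?_
        have hstep : ((fun s : ℝ => Complex.exp (-(z * s)) * ((A s i k : ℝ) : ℂ))
            ⋆[ContinuousLinearMap.mul ℂ ℂ]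
            (fun u : ℝ => Complex.exp (-(z * u)) * ((B u k j : ℝ) : ℂ))) t
            = Complex.exp (-(z * t)) * ((((fun s => A s i k)
              ⋆[ContinuousLinearMap.mul ℝ ℝ] (fun u => B u k j)) t : ℝ) : ℂ) := by
          have hik : Integrable fun s => A s i k * B (t - s) k j := by
            simpa [ConvolutionExistsAt, ContinuousLinearMap.mul_apply'] using h1 k
          rw [convolution_def, convolution_def]
          simp only [ContinuousLinearMap.mul_apply']
          have hcast : ((∫ s : ℝ, A s i k * B (t - s) k j : ℝ) : ℂ)
              = ∫ s : ℝ, ((A s i k * B (t - s) k j : ℝ) : ℂ) := by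
            have := (ContinuousLinearMap.integral_comp_comm Complex.ofRealCLM hik).symm
            simpa using this
          rw [hcast, ← integral_const_mul]
          refine integral_congr_ae (Filter.Eventually.of_forall fun s => ?_)
          rw [← hEmul t s]
          push_cast
          ring
        rw [hstep]
    _ = ∑ k, ∫ t : ℝ, ((fun s : ℝ => Complex.exp (-(z * s)) * ((A s i k : ℝ) : ℂ))
          ⋆[ContinuousLinearMap.mul ℂ ℂ]
          (fun u : ℝ => Complex.exp (-(z * u)) * ((B u k j : ℝ) : ℂ))) t :=
        integral_finset_sum _ fun k _ =>
          Integrable.integrable_convolution (L := ContinuousLinearMap.mul ℂ ℂ)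
            (hfa k) (hfb k)
    _ = ∑ k, (lap z A) i k * (lap z B) k j := by
        refine Finset.sum_congr rfl fun k _ => ?_
        rw [integral_convolution (L := ContinuousLinearMap.mul ℂ ℂ) (hfa k) (hfb k)]
        simp [ContinuousLinearMap.mul_apply', lap]

lemma lap_convPow {d : ℕ} {z : ℂ} (hz : 0 ≤ z.re) {φ : ℝ → Matrix (Fin d) (Fin d) ℝ}
    (hφ : Ker φ) (hker : ∀ k, Ker (fun t => convPow φ k t))
    (k : ℕ) : lap z (convPow φ k) = (lap z φ) ^ (k + 1) := by
  induction k with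
  | zero => rw [pow_one]; rfl
  | succ k ih =>
      have : convPow φ (k + 1) = mconv φ (convPow φ k) := rfl
      rw [this, lap_mconv hz hφ (hker k), ih, ← pow_succ']

/-- For an admissible kernel `φ` with `φ̂₀ = ∫ φ` of spectral radius `< 1` and
`Ψ = ∑_{k ≥ 1} φ^{⋆k}` (entrywise `L¹`/a.e. sum), the Laplace transforms satisfy
`Ψ̂_z = φ̂_z (I - φ̂_z)⁻¹` and `I + Ψ̂_z = (I - φ̂_z)⁻¹` for every `z` with `Re z ≥ 0`. -/
theorem stmt_9 {d : ℕ} (φ : ℝ → Matrix (Fin d) (Fin d) ℝ)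
    (hmeas : ∀ i j, Measurable fun t => φ t i j)
    (hpos : ∀ t i j, 0 ≤ φ t i j)
    (hint : ∀ i j, Integrable fun t => φ t i j)
    (hcausal : ∀ t < (0 : ℝ), φ t = 0)
    (hρ : spectralRadius ℂ
      ((Matrix.of fun i j => ∫ t : ℝ, φ t i j).map Complex.ofReal) < 1)
    (Ψ : ℝ → Matrix (Fin d) (Fin d) ℝ)
    (hΨint : ∀ i j, Integrable fun t => Ψ t i j)
    (hΨ : ∀ᵐ t : ℝ, ∀ i j, HasSum (fun k : ℕ => convPow φ k t i j) (Ψ t i j)) :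
    ∀ z : ℂ, 0 ≤ z.re →
      (Matrix.of fun i j => ∫ t : ℝ, Complex.exp (-(z * t)) * ((Ψ t i j : ℝ) : ℂ)) =
        (Matrix.of fun i j => ∫ t : ℝ, Complex.exp (-(z * t)) * ((φ t i j : ℝ) : ℂ)) *
        (1 - Matrix.of fun i j => ∫ t : ℝ, Complex.exp (-(z * t)) * ((φ t i j : ℝ) : ℂ))⁻¹ ∧
      1 + (Matrix.of fun i j => ∫ t : ℝ, Complex.exp (-(z * t)) * ((Ψ t i j : ℝ) : ℂ)) =
        (1 - Matrix.of fun i j => ∫ t : ℝ, Complex.exp (-(z * t)) * ((φ t i j : ℝ) : ℂ))⁻¹ := by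
  intro z hz
  have hφK : Ker φ := ⟨hint, fun i j => Filter.Eventually.of_forall fun t ht => by
    rw [hcausal t ht]; rfl⟩
  have hker : ∀ k, Ker (convPow φ k) := by
    intro k
    induction k with
    | zero => exact hφK
    | succ k ih => exact ker_mconv hφK ih
  have hnn : ∀ k t i j, 0 ≤ convPow φ k t i j := by
    intro k
    induction k with
    | zero => exact hpos
    | succ k ih => exact mconv_nonneg hpos ih
  have hpow : ∀ k, lap z (convPow φ k) = (lap z φ) ^ (k + 1) :=
    lap_convPow hz hφK hker
  -- entrywise HasSum for the Laplace transform of Ψ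
  have hS : ∀ i j, HasSum (fun k : ℕ => ((lap z φ) ^ (k + 1)) i j) (lap z Ψ i j) := by
    intro i j
    set F : ℕ → ℝ → ℂ := fun k t => Complex.exp (-(z * t)) * ((convPow φ k t i j : ℝ) : ℂ)
      with hF
    have hFint : ∀ k, Integrable (F k) := fun k => lap_integrand hz (hker k) i j
    have hbound : ∀ k, (∫ t : ℝ, ‖F k t‖) ≤ ∫ t : ℝ, convPow φ k t i j := by
      intro k
      refine integral_mono_ae (hFint k).norm ((hker k).1 i j) ?_
      filter_upwards [(hker k).2 i j] with t ht
      rcases le_or_gt 0 t with h0 | h0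
      · rw [hF]
        simp only [norm_mul, Complex.norm_real]
        calc ‖Complex.exp (-(z * t))‖ * ‖convPow φ k t i j‖
            ≤ 1 * ‖convPow φ k t i j‖ :=
              mul_le_mul_of_nonneg_right (exp_norm_le hz h0) (norm_nonneg _)
          _ = convPow φ k t i j := by
              rw [one_mul, Real.norm_eq_abs, abs_of_nonneg (hnn k t i j)]
      · rw [hF]; simp [ht h0]
    have hsummable : Summable fun k => ∫ t : ℝ, ‖F k t‖ := by
      refine summable_of_sum_range_le (c := ∫ t : ℝ, Ψ t i j)
        (fun k => integral_nonneg fun t => norm_nonneg _) (fun n => ?_)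
      calc ∑ k ∈ Finset.range n, ∫ t : ℝ, ‖F k t‖
          ≤ ∑ k ∈ Finset.range n, ∫ t : ℝ, convPow φ k t i j :=
            Finset.sum_le_sum fun k _ => hbound k
        _ = ∫ t : ℝ, ∑ k ∈ Finset.range n, convPow φ k t i j :=
            (integral_finset_sum _ fun k _ => (hker k).1 i j).symm
        _ ≤ ∫ t : ℝ, Ψ t i j := by
            refine integral_mono_ae
              (integrable_finset_sum _ fun k _ => (hker k).1 i j) (hΨint i j) ?_
            filter_upwards [hΨ] with t ht
            exact sum_le_hasSum (Finset.range n) (fun k _ => hnn k t i j) (ht i j)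
    have hHas := MeasureTheory.hasSum_integral_of_summable_integral_norm hFint hsummable
    have heq1 : (∫ t : ℝ, ∑' k, F k t) = lap z Ψ i j := by
      refine integral_congr_ae ?_
      filter_upwards [hΨ] with t ht
      have : HasSum (fun k => F k t) (Complex.exp (-(z * t)) * ((Ψ t i j : ℝ) : ℂ)) := by
        have hc : HasSum (fun k => ((convPow φ k t i j : ℝ) : ℂ)) ((Ψ t i j : ℝ) : ℂ) :=
          Complex.hasSum_ofReal.mpr (ht i j)
        exact hc.mul_left _
      exact this.tsum_eq
    have heq2 : ∀ k, (∫ t : ℝ, F k t) = ((lap z φ) ^ (k + 1)) i j := by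
      intro k
      rw [← hpow k]
      rfl
    rw [heq1] at hHas
    exact (funext heq2 : (fun k => ∫ t : ℝ, F k t) = _) ▸ hHas
  -- the two functional equations in the Laplace domain
  have h1 : lap z φ * lap z Ψ = lap z Ψ - lap z φ := by
    ext i j
    have hL : HasSum (fun k : ℕ => ((lap z φ) ^ (k + 1 + 1)) i j)
        ((lap z φ * lap z Ψ) i j) := by
      have h := hasSum_sum (s := (Finset.univ : Finset (Fin d)))
        (f := fun l k => lap z φ i l * ((lap z φ) ^ (k + 1)) l j)
        (a := fun l => lap z φ i l * lap z Ψ l j)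
        (fun l _ => (hS l j).mul_left _)
      have e : ∀ k : ℕ, ∑ l, lap z φ i l * ((lap z φ) ^ (k + 1)) l j
          = ((lap z φ) ^ (k + 1 + 1)) i j := by
        intro k
        rw [pow_succ' (lap z φ) (k + 1), Matrix.mul_apply]
      rw [Matrix.mul_apply]
      exact (funext e) ▸ h
    have hR : HasSum (fun k : ℕ => ((lap z φ) ^ (k + 1 + 1)) i j)
        ((lap z Ψ - lap z φ) i j) := by
      refine (hasSum_nat_add_iff (f := fun k => ((lap z φ) ^ (k + 1)) i j) 1).mpr ?_
      simpa [Matrix.sub_apply, pow_one, sub_add_cancel] using hS i j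
    exact hL.unique hR
  have h2 : lap z Ψ * lap z φ = lap z Ψ - lap z φ := by
    ext i j
    have hL : HasSum (fun k : ℕ => ((lap z φ) ^ (k + 1 + 1)) i j)
        ((lap z Ψ * lap z φ) i j) := by
      have h := hasSum_sum (s := (Finset.univ : Finset (Fin d)))
        (f := fun l k => ((lap z φ) ^ (k + 1)) i l * lap z φ l j)
        (a := fun l => lap z Ψ i l * lap z φ l j)
        (fun l _ => (hS i l).mul_right _)
      have e : ∀ k : ℕ, ∑ l, ((lap z φ) ^ (k + 1)) i l * lap z φ l j
          = ((lap z φ) ^ (k + 1 + 1)) i j := by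
        intro k
        rw [pow_succ (lap z φ) (k + 1), Matrix.mul_apply]
      rw [Matrix.mul_apply]
      exact (funext e) ▸ h
    have hR : HasSum (fun k : ℕ => ((lap z φ) ^ (k + 1 + 1)) i j)
        ((lap z Ψ - lap z φ) i j) := by
      refine (hasSum_nat_add_iff (f := fun k => ((lap z φ) ^ (k + 1)) i j) 1).mpr ?_
      simpa [Matrix.sub_apply, pow_one, sub_add_cancel] using hS i j
    exact hL.unique hR
  have hinv1 : (1 - lap z φ) * (1 + lap z Ψ) = 1 := by
    have e : (1 - lap z φ) * (1 + lap z Ψ)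
        = 1 + lap z Ψ - lap z φ - lap z φ * lap z Ψ := by noncomm_ring
    rw [e, h1]
    abel
  have hR : (1 - lap z φ)⁻¹ = 1 + lap z Ψ := Matrix.inv_eq_right_inv hinv1
  constructor
  · show lap z Ψ = lap z φ * (1 - lap z φ)⁻¹
    rw [hR, mul_add, mul_one, h1]
    abel
  · show 1 + lap z Ψ = (1 - lap z φ)⁻¹
    rw [hR]
end

section
/- Let f : ℝ → [0, ∞] be measurable, let h > 0 and τ ∈ ℝ. Then (1/h) ∫_{t=0}^{h} ∫_{t'=τ}^{τ+h} f(t − t') dt' dt = ∫_ℝ f(s) g^{(h)}(s + τ) ds, where g^{(h)}(u) = max(1 − |u|/h, 0). -/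
open MeasureTheory
open scoped ENNReal

/-- For a measurable `f : ℝ → [0,∞]`, `h > 0` and `τ ∈ ℝ`,
`(1/h) ∫_{t=0}^{h} ∫_{t'=τ}^{τ+h} f(t - t') dt' dt = ∫_ℝ f(s) g⁽ʰ⁾(s + τ) ds`,
where `g⁽ʰ⁾(u) = max(1 - |u|/h, 0)`. -/
theorem stmt_13 (f : ℝ → ℝ≥0∞) (hf : Measurable f) (h τ : ℝ) (hh : 0 < h) :
    (∫⁻ t in Set.Ioc (0 : ℝ) h, ∫⁻ t' in Set.Ioc τ (τ + h), f (t - t')) / ENNReal.ofReal h =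
      ∫⁻ s : ℝ, f s * ENNReal.ofReal (max (1 - |s + τ| / h) 0) := by
  -- Step 1: substitute s = t - t' in the inner integral
  have step1 : ∀ t : ℝ, (∫⁻ t' in Set.Ioc τ (τ + h), f (t - t'))
      = ∫⁻ s, f s * (Set.Ioc (s + τ) (s + τ + h)).indicator 1 t := by
    intro t
    have e1 : (∫⁻ t' in Set.Ioc τ (τ + h), f (t - t'))
        = ∫⁻ s in (fun t' => t - t') '' Set.Ioc τ (τ + h), f s :=
      (Measure.measurePreserving_sub_left volume t).setLIntegral_comp_emb
        (MeasurableEquiv.subLeft t).measurableEmbedding f _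
    rw [e1, Set.image_const_sub_Ioc, ← lintegral_indicator measurableSet_Ico _]
    congr 1
    ext s
    rw [Set.indicator_apply, Set.indicator_apply]
    by_cases hs : s ∈ Set.Ico (t - (τ + h)) (t - τ)
    · have ht : t ∈ Set.Ioc (s + τ) (s + τ + h) := by
        obtain ⟨h1, h2⟩ := hs
        constructor <;> linarith
      simp [hs, ht]
    · have ht : t ∉ Set.Ioc (s + τ) (s + τ + h) := by
        intro ⟨h1, h2⟩
        exact hs ⟨by linarith, by linarith⟩
      simp [hs, ht]
  -- Step 2: swap the integrals
  have meas : AEMeasurable (fun p : ℝ × ℝ => f p.2 * (Set.Ioc (p.2 + τ) (p.2 + τ + h)).indicator 1 p.1)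
      ((volume.restrict (Set.Ioc (0:ℝ) h)).prod volume) := by
    apply Measurable.aemeasurable
    apply Measurable.mul (hf.comp measurable_snd)
    have : (fun p : ℝ × ℝ => (Set.Ioc (p.2 + τ) (p.2 + τ + h)).indicator (1 : ℝ → ℝ≥0∞) p.1)
        = Set.indicator {p : ℝ × ℝ | p.2 + τ < p.1 ∧ p.1 ≤ p.2 + τ + h} 1 := by
      ext p
      rw [Set.indicator_apply, Set.indicator_apply]
      rfl
    rw [this]
    apply Measurable.indicator measurable_const
    apply MeasurableSet.inter
    · exact measurableSet_lt (measurable_snd.add_const τ) measurable_fst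
    · exact measurableSet_le measurable_fst ((measurable_snd.add_const τ).add_const h)
  have step2 : (∫⁻ t in Set.Ioc (0:ℝ) h, ∫⁻ t' in Set.Ioc τ (τ + h), f (t - t'))
      = ∫⁻ s, ∫⁻ t in Set.Ioc (0:ℝ) h, f s * (Set.Ioc (s + τ) (s + τ + h)).indicator 1 t := by
    simp_rw [step1]
    exact lintegral_lintegral_swap meas
  -- Step 3: compute the inner integral in t
  have step3 : ∀ s : ℝ, (∫⁻ t in Set.Ioc (0:ℝ) h, f s * (Set.Ioc (s + τ) (s + τ + h)).indicator 1 t)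
      = f s * (ENNReal.ofReal h * ENNReal.ofReal (max (1 - |s + τ| / h) 0)) := by
    intro s
    have hmeas : Measurable ((Set.Ioc (s + τ) (s + τ + h)).indicator (1 : ℝ → ℝ≥0∞)) :=
      measurable_one.indicator measurableSet_Ioc
    rw [lintegral_const_mul _ hmeas]
    congr 1
    rw [lintegral_indicator measurableSet_Ioc _]
    rw [Measure.restrict_restrict measurableSet_Ioc]
    simp only [Pi.one_apply]
    rw [setLIntegral_one, Set.Ioc_inter_Ioc, Real.volume_Ioc]
    have key : min (s + τ + h) h - max (s + τ) 0 = h - |s + τ| := by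
      rcases le_total 0 (s + τ) with hc | hc
      · rw [abs_of_nonneg hc, max_eq_left hc, min_eq_right (by linarith)]
      · rw [abs_of_nonpos hc, max_eq_right hc, min_eq_left (by linarith)]; ring
    have key2 : ENNReal.ofReal (h - |s + τ|)
        = ENNReal.ofReal h * ENNReal.ofReal (max (1 - |s + τ| / h) 0) := by
      rw [← ENNReal.ofReal_mul hh.le]
      have : h * max (1 - |s + τ| / h) 0 = max (h - |s + τ|) 0 := by
        rw [mul_max_of_nonneg _ _ hh.le, mul_zero]
        congr 1
        field_simp
      rw [this]
      rcases le_total (h - |s + τ|) 0 with hc | hc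
      · rw [max_eq_right hc, ENNReal.ofReal_of_nonpos hc, ENNReal.ofReal_zero]
      · rw [max_eq_left hc]
    rw [key, key2]
  rw [step2]
  simp_rw [step3]
  have : ∀ s : ℝ, f s * (ENNReal.ofReal h * ENNReal.ofReal (max (1 - |s + τ| / h) 0))
      = ENNReal.ofReal h * (f s * ENNReal.ofReal (max (1 - |s + τ| / h) 0)) := by
    intro s; ring
  simp_rw [this]
  rw [lintegral_const_mul' _ _ ENNReal.ofReal_ne_top]
  rw [mul_comm, mul_div_assoc,
    ENNReal.div_self (ENNReal.ofReal_pos.mpr hh).ne' ENNReal.ofReal_ne_top, mul_one]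
end

section
/- Let Ψ¹¹, Ψ¹² : ℝ → ℝ be integrable and let λ̄ > 0. Define v¹¹(τ) = λ̄ ( Ψ¹¹(τ) + Ψ¹¹(−τ) + ∫_ℝ [Ψ¹¹(s−τ)Ψ¹¹(s) + Ψ¹²(s−τ)Ψ¹²(s)] ds ) and v¹²(τ) = λ̄ ( Ψ¹²(τ) + Ψ¹²(−τ) + ∫_ℝ [Ψ¹¹(s−τ)Ψ¹²(s) + Ψ¹²(s−τ)Ψ¹¹(s)] ds ). Then for every ω ∈ ℝ: λ̄ + v̂¹¹(ω) + v̂¹²(ω) = λ̄ |1 + Ψ̂¹¹(ω) + Ψ̂¹²(ω)|² and λ̄ + v̂¹¹(ω) − v̂¹²(ω) = λ̄ |1 + Ψ̂¹¹(ω) − Ψ̂¹²(ω)|², where f̂(ω) = ∫_ℝ e^{−iωτ} f(τ) dτ denotes the Fourier transform. -/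
open MeasureTheory

noncomputable def Ee (ω τ : ℝ) : ℂ := Complex.exp (-(Complex.I * ω * τ))

lemma Ee_norm (ω τ : ℝ) : ‖Ee ω τ‖ = 1 := by
  simp [Ee, Complex.norm_exp]

lemma Ee_cont (ω : ℝ) : Continuous (Ee ω) := by
  unfold Ee; fun_prop

lemma mulE_integrable (ω : ℝ) (g : ℝ → ℝ) (hg : Integrable g) :
    Integrable (fun τ => Ee ω τ * (g τ : ℂ)) := by
  refine Integrable.bdd_mul ?_ ((Ee_cont ω).aestronglyMeasurable) (Filter.Eventually.of_forall fun τ => le_of_eq (Ee_norm ω τ))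
  exact hg.ofReal

lemma prod_integrable (g h : ℝ → ℝ) (hg : Integrable g) (hh : Integrable h) :
    Integrable (fun p : ℝ × ℝ => g (p.2 - p.1) * h p.2)
      ((volume : Measure ℝ).prod volume) := by
  have := hh.convolution_integrand (ContinuousLinearMap.mul ℝ ℝ) hg.comp_neg
  simp only [ContinuousLinearMap.mul_apply', neg_sub] at this
  simpa [mul_comm] using this

lemma corr_integrable (g h : ℝ → ℝ) (hg : Integrable g) (hh : Integrable h) :
    Integrable (fun τ => ∫ s : ℝ, g (s - τ) * h s) := by
  have := (prod_integrable g h hg hh).integral_prod_left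
  simpa using this

lemma Ee_neg (ω τ : ℝ) : Ee ω (-τ) = starRingEnd ℂ (Ee ω τ) := by
  simp only [Ee, ← Complex.exp_conj, map_neg, map_mul, Complex.conj_I, Complex.conj_ofReal]
  push_cast
  ring_nf

lemma conj_mulE (ω τ : ℝ) (g : ℝ → ℝ) :
    starRingEnd ℂ (Ee ω τ * (g τ : ℂ)) = Ee ω (-τ) * (g τ : ℂ) := by
  rw [Ee_neg, map_mul, Complex.conj_ofReal]

lemma refl_fourier (ω : ℝ) (g : ℝ → ℝ) :
    ∫ τ : ℝ, Ee ω τ * ((g (-τ) : ℝ) : ℂ)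
      = starRingEnd ℂ (∫ τ : ℝ, Ee ω τ * ((g τ : ℝ) : ℂ)) := by
  rw [← integral_conj]
  rw [← MeasureTheory.integral_neg_eq_self (fun τ : ℝ => Ee ω τ * ((g (-τ) : ℝ) : ℂ)) volume]
  refine integral_congr_ae (Filter.Eventually.of_forall fun τ => ?_)
  simp [conj_mulE, neg_neg]

lemma Ee_sub (ω s u : ℝ) : Ee ω (s - u) = Ee ω s * starRingEnd ℂ (Ee ω u) := by
  rw [← Ee_neg]
  simp only [Ee, ← Complex.exp_add]
  push_cast
  ring_nf

lemma corr_fourier (ω : ℝ) (g h : ℝ → ℝ) (hg : Integrable g) (hh : Integrable h) :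
    (∫ τ : ℝ, Ee ω τ * (((∫ s : ℝ, g (s - τ) * h s) : ℝ) : ℂ))
      = (∫ τ : ℝ, Ee ω τ * ((h τ : ℝ) : ℂ))
        * starRingEnd ℂ (∫ τ : ℝ, Ee ω τ * ((g τ : ℝ) : ℂ)) := by
  have hF : Integrable (fun p : ℝ × ℝ => Ee ω p.1 * ((g (p.2 - p.1) * h p.2 : ℝ) : ℂ))
      ((volume : Measure ℝ).prod volume) := by
    refine Integrable.bdd_mul ((prod_integrable g h hg hh).ofReal) ?_
      (Filter.Eventually.of_forall fun p => le_of_eq (Ee_norm ω p.1))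
    exact ((Ee_cont ω).comp continuous_fst).aestronglyMeasurable
  calc (∫ τ : ℝ, Ee ω τ * (((∫ s : ℝ, g (s - τ) * h s) : ℝ) : ℂ))
      = ∫ τ : ℝ, ∫ s : ℝ, Ee ω τ * ((g (s - τ) * h s : ℝ) : ℂ) := by
        refine integral_congr_ae (Filter.Eventually.of_forall fun τ => ?_)
        beta_reduce
        rw [MeasureTheory.integral_const_mul]
        congr 1
        exact (integral_ofReal (𝕜 := ℂ)).symm
    _ = ∫ s : ℝ, ∫ τ : ℝ, Ee ω τ * ((g (s - τ) * h s : ℝ) : ℂ) := integral_integral_swap hF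
    _ = ∫ s : ℝ, (Ee ω s * ((h s : ℝ) : ℂ))
          * starRingEnd ℂ (∫ u : ℝ, Ee ω u * ((g u : ℝ) : ℂ)) := by
        refine integral_congr_ae (Filter.Eventually.of_forall fun s => ?_)
        calc (∫ τ : ℝ, Ee ω τ * ((g (s - τ) * h s : ℝ) : ℂ))
            = ∫ τ : ℝ, (fun u : ℝ => Ee ω (s - u) * ((g u : ℝ) : ℂ) * ((h s : ℝ) : ℂ)) (s - τ) := by
              refine integral_congr_ae (Filter.Eventually.of_forall fun τ => ?_)
              simp only [sub_sub_cancel]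
              push_cast
              ring
          _ = ∫ u : ℝ, Ee ω (s - u) * ((g u : ℝ) : ℂ) * ((h s : ℝ) : ℂ) :=
              MeasureTheory.integral_sub_left_eq_self (fun u : ℝ => Ee ω (s - u) * ((g u : ℝ) : ℂ) * ((h s : ℝ) : ℂ)) volume s
          _ = (Ee ω s * ((h s : ℝ) : ℂ))
                * starRingEnd ℂ (∫ u : ℝ, Ee ω u * ((g u : ℝ) : ℂ)) := by
              rw [← integral_conj, ← MeasureTheory.integral_const_mul]
              refine integral_congr_ae (Filter.Eventually.of_forall fun u => ?_)
              beta_reduce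
              rw [Ee_sub]
              simp only [map_mul, Complex.conj_ofReal]
              ring
    _ = (∫ τ : ℝ, Ee ω τ * ((h τ : ℝ) : ℂ))
          * starRingEnd ℂ (∫ τ : ℝ, Ee ω τ * ((g τ : ℝ) : ℂ)) := by
        rw [MeasureTheory.integral_mul_const]

lemma key_lemma (ω lam : ℝ) (g : ℝ → ℝ) (hg : Integrable g) :
    (lam : ℂ)
      + (∫ τ : ℝ, Ee ω τ * (((lam * (g τ + g (-τ) + ∫ s : ℝ, g (s - τ) * g s)) : ℝ) : ℂ))
      = ((lam * ‖(1 : ℂ) + ∫ τ : ℝ, Ee ω τ * ((g τ : ℝ) : ℂ)‖ ^ 2 : ℝ) : ℂ) := by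
  have hi1 := mulE_integrable ω g hg
  have hi2 : Integrable (fun τ : ℝ => Ee ω τ * ((g (-τ) : ℝ) : ℂ)) := by
    simpa using mulE_integrable ω (fun τ => g (-τ)) hg.comp_neg
  have hi3 : Integrable (fun τ : ℝ => Ee ω τ * (((∫ s : ℝ, g (s - τ) * g s) : ℝ) : ℂ)) := by
    simpa using mulE_integrable ω (fun τ => ∫ s : ℝ, g (s - τ) * g s) (corr_integrable g g hg hg)
  have split : (∫ τ : ℝ, Ee ω τ * (((lam * (g τ + g (-τ) + ∫ s : ℝ, g (s - τ) * g s)) : ℝ) : ℂ))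
      = (lam : ℂ) * ((∫ τ : ℝ, Ee ω τ * ((g τ : ℝ) : ℂ))
          + (∫ τ : ℝ, Ee ω τ * ((g (-τ) : ℝ) : ℂ))
          + (∫ τ : ℝ, Ee ω τ * (((∫ s : ℝ, g (s - τ) * g s) : ℝ) : ℂ))) := by
    have comb : Integrable (fun τ : ℝ => Ee ω τ * ((g τ : ℝ) : ℂ) + Ee ω τ * ((g (-τ) : ℝ) : ℂ)) :=
      hi1.add hi2
    rw [← integral_add hi1 hi2, ← integral_add comb hi3,
      ← MeasureTheory.integral_const_mul]
    refine integral_congr_ae (Filter.Eventually.of_forall fun τ => ?_)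
    simp only [Pi.add_apply]
    push_cast
    ring
  rw [split, refl_fourier, corr_fourier ω g g hg hg]
  have hn : ((‖(1 : ℂ) + ∫ τ : ℝ, Ee ω τ * ((g τ : ℝ) : ℂ)‖ ^ 2 : ℝ) : ℂ)
      = ((1 : ℂ) + ∫ τ : ℝ, Ee ω τ * ((g τ : ℝ) : ℂ))
        * starRingEnd ℂ ((1 : ℂ) + ∫ τ : ℝ, Ee ω τ * ((g τ : ℝ) : ℂ)) := by
    rw [Complex.mul_conj, Complex.normSq_eq_norm_sq]
  rw [Complex.ofReal_mul, hn, map_add, map_one]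
  ring

lemma main_half (ω lam : ℝ) (a b : ℝ → ℝ) (ha : Integrable a) (hb : Integrable b)
    (v w P : ℝ → ℝ)
    (hv : ∀ τ : ℝ, v τ = lam * (a τ + a (-τ) + ∫ s : ℝ, (a (s - τ) * a s + b (s - τ) * b s)))
    (hw : ∀ τ : ℝ, w τ = lam * (b τ + b (-τ) + ∫ s : ℝ, (a (s - τ) * b s + b (s - τ) * a s)))
    (hPd : ∀ τ : ℝ, P τ = a τ + b τ) :
    (lam : ℂ) + (∫ τ : ℝ, Ee ω τ * ((v τ : ℝ) : ℂ)) + (∫ τ : ℝ, Ee ω τ * ((w τ : ℝ) : ℂ))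
      = ((lam * ‖(1 : ℂ) + (∫ τ : ℝ, Ee ω τ * ((a τ : ℝ) : ℂ))
          + (∫ τ : ℝ, Ee ω τ * ((b τ : ℝ) : ℂ))‖ ^ 2 : ℝ) : ℂ) := by
  have hc : Integrable (fun τ : ℝ => ∫ s : ℝ, (a (s - τ) * a s + b (s - τ) * b s)) := by
    simpa using ((prod_integrable a a ha ha).add (prod_integrable b b hb hb)).integral_prod_left
  have hc' : Integrable (fun τ : ℝ => ∫ s : ℝ, (a (s - τ) * b s + b (s - τ) * a s)) := by
    simpa using ((prod_integrable a b ha hb).add (prod_integrable b a hb ha)).integral_prod_left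
  have hvint : Integrable v := by
    rw [funext hv]
    exact ((ha.add ha.comp_neg).add hc).const_mul lam
  have hwint : Integrable w := by
    rw [funext hw]
    exact ((hb.add hb.comp_neg).add hc').const_mul lam
  have hP : Integrable P := by
    rw [funext hPd]; exact ha.add hb
  have hsum : (∫ τ : ℝ, Ee ω τ * ((v τ : ℝ) : ℂ)) + (∫ τ : ℝ, Ee ω τ * ((w τ : ℝ) : ℂ))
      = ∫ τ : ℝ, Ee ω τ * (((lam * (P τ + P (-τ) + ∫ s : ℝ, P (s - τ) * P s)) : ℝ) : ℂ) := by
    rw [← integral_add (mulE_integrable ω v hvint) (mulE_integrable ω w hwint)]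
    refine integral_congr_ae ?_
    filter_upwards [(prod_integrable a a ha ha).prod_right_ae,
      (prod_integrable b b hb hb).prod_right_ae,
      (prod_integrable a b ha hb).prod_right_ae,
      (prod_integrable b a hb ha).prod_right_ae] with τ haa hbb hab hba
    have haa' : Integrable (fun s : ℝ => a (s - τ) * a s) := haa
    have hbb' : Integrable (fun s : ℝ => b (s - τ) * b s) := hbb
    have hab' : Integrable (fun s : ℝ => a (s - τ) * b s) := hab
    have hba' : Integrable (fun s : ℝ => b (s - τ) * a s) := hba
    have hA : Integrable (fun s : ℝ => a (s - τ) * a s + b (s - τ) * b s) := haa'.add hbb'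
    have hB : Integrable (fun s : ℝ => a (s - τ) * b s + b (s - τ) * a s) := hab'.add hba'
    have e1 : v τ + w τ = lam * (P τ + P (-τ) + ∫ s : ℝ, P (s - τ) * P s) := by
      have h4 : (∫ s : ℝ, P (s - τ) * P s)
          = (∫ s : ℝ, (a (s - τ) * a s + b (s - τ) * b s))
            + (∫ s : ℝ, (a (s - τ) * b s + b (s - τ) * a s)) := by
        rw [← integral_add hA hB]
        refine integral_congr_ae (Filter.Eventually.of_forall fun s => ?_)
        simp only [hPd]
        ring
      rw [hv τ, hw τ, h4, hPd τ, hPd (-τ)]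
      ring
    show Ee ω τ * ((v τ : ℝ) : ℂ) + Ee ω τ * ((w τ : ℝ) : ℂ) = _
    calc Ee ω τ * ((v τ : ℝ) : ℂ) + Ee ω τ * ((w τ : ℝ) : ℂ)
        = Ee ω τ * (((v τ + w τ : ℝ)) : ℂ) := by push_cast; ring
      _ = _ := by rw [e1]
  rw [add_assoc, hsum, key_lemma ω lam P hP]
  have hatP : (∫ τ : ℝ, Ee ω τ * ((P τ : ℝ) : ℂ))
      = (∫ τ : ℝ, Ee ω τ * ((a τ : ℝ) : ℂ)) + (∫ τ : ℝ, Ee ω τ * ((b τ : ℝ) : ℂ)) := by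
    rw [← integral_add (mulE_integrable ω a ha) (mulE_integrable ω b hb)]
    refine integral_congr_ae (Filter.Eventually.of_forall fun τ => ?_)
    simp only [hPd]
    push_cast
    ring
  rw [hatP, ← add_assoc]


/-- Bisymmetric two-dimensional spectral factorization: with
`v¹¹(τ) = λ̄ (Ψ¹¹(τ) + Ψ¹¹(-τ) + ∫ [Ψ¹¹(s-τ)Ψ¹¹(s) + Ψ¹²(s-τ)Ψ¹²(s)] ds)` and
`v¹²(τ) = λ̄ (Ψ¹²(τ) + Ψ¹²(-τ) + ∫ [Ψ¹¹(s-τ)Ψ¹²(s) + Ψ¹²(s-τ)Ψ¹¹(s)] ds)`, one has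
`λ̄ + v̂¹¹(ω) + v̂¹²(ω) = λ̄ |1 + Ψ̂¹¹(ω) + Ψ̂¹²(ω)|²` and
`λ̄ + v̂¹¹(ω) - v̂¹²(ω) = λ̄ |1 + Ψ̂¹¹(ω) - Ψ̂¹²(ω)|²` for every `ω`,
where `f̂(ω) = ∫ e^{-iωτ} f(τ) dτ`. -/
theorem stmt_16 (Ψ11 Ψ12 : ℝ → ℝ) (h11 : Integrable Ψ11) (h12 : Integrable Ψ12)
    (lam : ℝ) (hlam : 0 < lam)
    (v11 v12 : ℝ → ℝ)
    (hv11 : ∀ τ : ℝ, v11 τ =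
      lam * (Ψ11 τ + Ψ11 (-τ) + ∫ s : ℝ, (Ψ11 (s - τ) * Ψ11 s + Ψ12 (s - τ) * Ψ12 s)))
    (hv12 : ∀ τ : ℝ, v12 τ =
      lam * (Ψ12 τ + Ψ12 (-τ) + ∫ s : ℝ, (Ψ11 (s - τ) * Ψ12 s + Ψ12 (s - τ) * Ψ11 s))) :
    ∀ ω : ℝ,
      ((lam : ℂ) + (∫ τ : ℝ, Complex.exp (-(Complex.I * ω * τ)) * ((v11 τ : ℝ) : ℂ))
          + (∫ τ : ℝ, Complex.exp (-(Complex.I * ω * τ)) * ((v12 τ : ℝ) : ℂ)) =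
        ((lam * ‖(1 : ℂ)
            + (∫ τ : ℝ, Complex.exp (-(Complex.I * ω * τ)) * ((Ψ11 τ : ℝ) : ℂ))
            + (∫ τ : ℝ, Complex.exp (-(Complex.I * ω * τ)) * ((Ψ12 τ : ℝ) : ℂ))‖ ^ 2
          : ℝ) : ℂ)) ∧
      ((lam : ℂ) + (∫ τ : ℝ, Complex.exp (-(Complex.I * ω * τ)) * ((v11 τ : ℝ) : ℂ))
          - (∫ τ : ℝ, Complex.exp (-(Complex.I * ω * τ)) * ((v12 τ : ℝ) : ℂ)) =
        ((lam * ‖(1 : ℂ)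
            + (∫ τ : ℝ, Complex.exp (-(Complex.I * ω * τ)) * ((Ψ11 τ : ℝ) : ℂ))
            - (∫ τ : ℝ, Complex.exp (-(Complex.I * ω * τ)) * ((Ψ12 τ : ℝ) : ℂ))‖ ^ 2
          : ℝ) : ℂ)) := by
  intro ω
  have Ee_def : ∀ τ : ℝ, Complex.exp (-(Complex.I * ω * τ)) = Ee ω τ := fun τ => rfl
  simp only [Ee_def]
  constructor
  · exact main_half ω lam Ψ11 Ψ12 h11 h12 v11 v12 (fun τ => Ψ11 τ + Ψ12 τ)
      hv11 hv12 (fun τ => rfl)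
  · -- minus part: apply main_half with b := -Ψ12, w := -v12
    have hv' : ∀ τ : ℝ, v11 τ =
        lam * (Ψ11 τ + Ψ11 (-τ) + ∫ s : ℝ,
          (Ψ11 (s - τ) * Ψ11 s + (-Ψ12 (s - τ)) * (-Ψ12 s))) := by
      intro τ
      rw [hv11 τ]
      congr 2
      refine integral_congr_ae (Filter.Eventually.of_forall fun s => ?_)
      ring
    have hw' : ∀ τ : ℝ, -v12 τ =
        lam * ((-Ψ12 τ) + (-Ψ12 (-τ)) + ∫ s : ℝ,
          (Ψ11 (s - τ) * (-Ψ12 s) + (-Ψ12 (s - τ)) * Ψ11 s)) := by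
      intro τ
      have : (∫ s : ℝ, (Ψ11 (s - τ) * (-Ψ12 s) + (-Ψ12 (s - τ)) * Ψ11 s))
          = ∫ s : ℝ, -(Ψ11 (s - τ) * Ψ12 s + Ψ12 (s - τ) * Ψ11 s) := by
        refine integral_congr_ae (Filter.Eventually.of_forall fun s => ?_)
        ring
      rw [this, integral_neg, hv12 τ]
      ring
    have H := main_half ω lam Ψ11 (fun τ => -Ψ12 τ) h11 h12.neg v11 (fun τ => -v12 τ)
      (fun τ => Ψ11 τ - Ψ12 τ) hv' hw' (fun τ => by ring)
    have e2 : (∫ τ : ℝ, Ee ω τ * (((-v12 τ : ℝ)) : ℂ))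
        = -(∫ τ : ℝ, Ee ω τ * ((v12 τ : ℝ) : ℂ)) := by
      rw [← integral_neg]
      refine integral_congr_ae (Filter.Eventually.of_forall fun τ => ?_)
      push_cast
      ring
    have e3 : (∫ τ : ℝ, Ee ω τ * (((-Ψ12 τ : ℝ)) : ℂ))
        = -(∫ τ : ℝ, Ee ω τ * ((Ψ12 τ : ℝ) : ℂ)) := by
      rw [← integral_neg]
      refine integral_congr_ae (Filter.Eventually.of_forall fun τ => ?_)
      push_cast
      ring
    rw [e2, e3] at H
    rw [← sub_eq_add_neg] at H
    rw [show (1 : ℂ) + (∫ τ : ℝ, Ee ω τ * ((Ψ11 τ : ℝ) : ℂ))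
        + -(∫ τ : ℝ, Ee ω τ * ((Ψ12 τ : ℝ) : ℂ))
        = (1 : ℂ) + (∫ τ : ℝ, Ee ω τ * ((Ψ11 τ : ℝ) : ℂ))
          - (∫ τ : ℝ, Ee ω τ * ((Ψ12 τ : ℝ) : ℂ)) from by ring] at H
    exact H
end
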